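/- The sum-of-squares conjunction encoding is correct: let k : ℕ, let pairs be a list of pairs of nat-polynomials each of all-length k, and let vars be a variable list of length k. Then evalNatPoly (conjEncode pairs).1 vars = evalNatPoly (conjEncode pairs).2 vars if and only if for every pair (p, n) in pairs, evalNatPoly p vars = evalNatPoly n vars. -/

import Mathlib

namespace Rice

/-- A program maps an input and a fuel bound to an optional output. -/
def Program := ℕ → ℕ → Option ℕ

/-- Observational equivalence: eventual agreement at every input. -/
def ObsEquiv (e f : Program) : Prop :=
  ∀ x, ∃ N, ∀ k, k ≥ N → e x k = f x k

/-- Stable termination on input 0. -/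
def TerminatesPred (e : Program) : Prop :=
  ∃ fuel v, e 0 fuel = some v ∧ ∀ fuel', fuel' ≥ fuel → e 0 fuel' = some v

/-- A program is stable (monotone in fuel). -/
def Stable (e : Program) : Prop :=
  ∀ x k v, e x k = some v → ∀ k', k' ≥ k → e x k' = some v

/-- The always-diverging program. -/
def diverge : Program := fun _ _ => none

/-- The always-halting program. -/
def halt : Program := fun _ _ => some 0

/-- Integer-coefficient polynomials as lists of monomials. -/
abbrev Poly := List (ℤ × List ℕ)

def evalMonomial (m : ℤ × List ℕ) (vars : List ℕ) : ℤ :=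
  m.1 * (List.foldl (fun acc p => acc * (p.1 : ℤ) ^ p.2) 1 (vars.zip m.2))

def evalPoly (P : Poly) (vars : List ℕ) : ℤ :=
  List.foldl (fun acc m => acc + evalMonomial m vars) 0 P

def cantorPair (a b : ℕ) : ℕ := (a + b) * (a + b + 1) / 2 + b
def cantorW (n : ℕ) : ℕ := (Nat.sqrt (8 * n + 1) - 1) / 2
def cantorUnpairSnd (n : ℕ) : ℕ := n - (cantorW n) * (cantorW n + 1) / 2
def cantorUnpairFst (n : ℕ) : ℕ := cantorW n - cantorUnpairSnd n

def decodeK : ℕ → ℕ → List ℕ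
  | 0, _ => []
  | 1, n => [n]
  | k + 2, n => decodeK (k + 1) (cantorUnpairFst n) ++ [cantorUnpairSnd n]

def checkSolution (ar : ℕ) (P : Poly) (n : ℕ) : Bool :=
  decide (evalPoly P (decodeK ar n) = 0)

def isSolvable (ar : ℕ) (P : Poly) : Prop := ∃ n, checkSolution ar P n = true
def isUnsolvable (ar : ℕ) (P : Poly) : Prop := ∀ n, checkSolution ar P n = false

def findSol (ar : ℕ) (P : Poly) : ℕ → Option ℕ
  | 0 => if checkSolution ar P 0 then some 0 else none
  | k + 1 =>
    match findSol ar P k with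
    | some n => some n
    | none => if checkSolution ar P (k + 1) then some (k + 1) else none

/-- The two-witness construction. -/
def S_D (e0 e1 : Program) (ar : ℕ) (D : Poly) (b : Bool) : Program :=
  fun x fuel =>
    match findSol ar D fuel with
    | some _ => (if b then e1 else e0) x fuel
    | none => none

/-- h10c constraints. -/
inductive h10c where
  | one : ℕ → h10c
  | plus : ℕ → ℕ → ℕ → h10c
  | mult : ℕ → ℕ → ℕ → h10c

def h10cSem (c : h10c) (φ : ℕ → ℕ) : Prop :=
  match c with
  | .one x => φ x = 1
  | .plus x y z => φ x + φ y = φ z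
  | .mult x y z => φ x * φ y = φ z

def H10C_SAT (cs : List h10c) : Prop := ∃ φ : ℕ → ℕ, ∀ c ∈ cs, h10cSem c φ

/-- Nat-coefficient polynomials. -/
abbrev NatPoly := List (ℕ × List ℕ)

def evalNatMonomial (m : ℕ × List ℕ) (vars : List ℕ) : ℕ :=
  m.1 * (List.foldl (fun acc p => acc * p.1 ^ p.2) 1 (vars.zip m.2))

def evalNatPoly (P : NatPoly) (vars : List ℕ) : ℕ :=
  List.foldl (fun acc m => acc + evalNatMonomial m vars) 0 P

def posMonomials (P : Poly) : NatPoly :=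
  P.filterMap (fun m => if 0 < m.1 then some (m.1.toNat, m.2) else none)

def negMonomials (P : Poly) : NatPoly :=
  P.filterMap (fun m => if m.1 < 0 then some ((-m.1).toNat, m.2) else none)

/-- An h10c instance: arity, positive part, negative part. -/
abbrev H10cInst := ℕ × NatPoly × NatPoly

def H10cSat (inst : H10cInst) : Prop :=
  ∃ n, evalNatPoly inst.2.1 (decodeK inst.1 n) = evalNatPoly inst.2.2 (decodeK inst.1 n)

def h10cToPoly (inst : H10cInst) : Poly :=
  inst.2.1.map (fun m => ((m.1 : ℤ), m.2)) ++ inst.2.2.map (fun m => (-(m.1 : ℤ), m.2))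

/-- Pointwise addition of exponent lists. -/
def map2Add : List ℕ → List ℕ → List ℕ
  | x :: xs, y :: ys => (x + y) :: map2Add xs ys
  | _, _ => []

def monoMult (m1 m2 : ℕ × List ℕ) : ℕ × List ℕ := (m1.1 * m2.1, map2Add m1.2 m2.2)

def polyMult (p1 p2 : NatPoly) : NatPoly := p1.flatMap (fun m1 => p2.map (monoMult m1))

def polyScale (c : ℕ) (p : NatPoly) : NatPoly := p.map (fun m => (c * m.1, m.2))

def polySq (p : NatPoly) : NatPoly := polyMult p p

/-- Sum-of-squares conjunction encoding. -/
def conjEncode : List (NatPoly × NatPoly) → NatPoly × NatPoly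
  | [] => ([], [])
  | (p, n) :: rest =>
    let r := conjEncode rest
    (polySq p ++ polySq n ++ r.1, polyScale 2 (polyMult p n) ++ r.2)

/-- All exponent lists have length k. -/
def allLen (k : ℕ) (p : NatPoly) : Prop := ∀ m ∈ p, m.2.length = k

lemma eval_eq_sum (P : NatPoly) (vars : List ℕ) :
    evalNatPoly P vars = (P.map (fun m => evalNatMonomial m vars)).sum := by
  have h : ∀ (a : ℕ), List.foldl (fun acc m => acc + evalNatMonomial m vars) a P
      = a + (P.map (fun m => evalNatMonomial m vars)).sum := by
    induction P with
    | nil => simp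
    | cons m P ih => intro a; simp [ih]; ring
  simpa [evalNatPoly] using h 0

lemma eval_append (P Q : NatPoly) (vars : List ℕ) :
    evalNatPoly (P ++ Q) vars = evalNatPoly P vars + evalNatPoly Q vars := by
  simp [eval_eq_sum]

def prodPow (vars es : List ℕ) : ℕ :=
  List.foldl (fun acc p => acc * p.1 ^ p.2) 1 (vars.zip es)

lemma prodPow_foldl (vars es : List ℕ) (a : ℕ) :
    List.foldl (fun acc p => acc * p.1 ^ p.2) a (vars.zip es) = a * prodPow vars es := by
  induction vars generalizing es a with
  | nil => simp [prodPow]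
  | cons v vs ih =>
    cases es with
    | nil => simp [prodPow]
    | cons e es =>
      simp only [List.zip_cons_cons, List.foldl_cons, prodPow]
      rw [ih, ih (a := 1 * v ^ e)]; ring

lemma prodPow_map2Add (vars e1 e2 : List ℕ) (h1 : e1.length = vars.length)
    (h2 : e2.length = vars.length) :
    prodPow vars (map2Add e1 e2) = prodPow vars e1 * prodPow vars e2 := by
  induction vars generalizing e1 e2 with
  | nil =>
    cases e1 <;> cases e2 <;> simp_all [prodPow, map2Add]
  | cons v vs ih =>
    cases e1 with
    | nil => simp at h1
    | cons a as =>
      cases e2 with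
      | nil => simp at h2
      | cons b bs =>
        simp only [map2Add, prodPow, List.zip_cons_cons, List.foldl_cons]
        rw [prodPow_foldl, prodPow_foldl, prodPow_foldl]
        have := ih as bs (by simpa using h1) (by simpa using h2)
        rw [show prodPow vs (map2Add as bs) = prodPow vs as * prodPow vs bs from this]
        rw [pow_add]; ring

lemma eval_monoMult (m1 m2 : ℕ × List ℕ) (vars : List ℕ)
    (h1 : m1.2.length = vars.length) (h2 : m2.2.length = vars.length) :
    evalNatMonomial (monoMult m1 m2) vars
      = evalNatMonomial m1 vars * evalNatMonomial m2 vars := by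
  simp only [evalNatMonomial, monoMult]
  rw [show (List.foldl (fun acc p => acc * p.1 ^ p.2) 1 (vars.zip (map2Add m1.2 m2.2)))
      = prodPow vars (map2Add m1.2 m2.2) from rfl,
    prodPow_map2Add vars m1.2 m2.2 h1 h2]
  show m1.1 * m2.1 * (prodPow vars m1.2 * prodPow vars m2.2)
      = m1.1 * prodPow vars m1.2 * (m2.1 * prodPow vars m2.2)
  ring

lemma eval_polyMult (p q : NatPoly) (vars : List ℕ)
    (hp : ∀ m ∈ p, m.2.length = vars.length)
    (hq : ∀ m ∈ q, m.2.length = vars.length) :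
    evalNatPoly (polyMult p q) vars = evalNatPoly p vars * evalNatPoly q vars := by
  induction p with
  | nil => simp [polyMult, evalNatPoly]
  | cons m p ih =>
    have hmul : polyMult (m :: p) q = q.map (monoMult m) ++ polyMult p q := by
      simp [polyMult]
    rw [hmul, eval_append, ih (fun m' hm' => hp m' (List.mem_cons_of_mem _ hm'))]
    have hmap : evalNatPoly (q.map (monoMult m)) vars
        = evalNatMonomial m vars * evalNatPoly q vars := by
      have hm := hp m (List.mem_cons_self)
      clear hmul ih hp
      simp only [eval_eq_sum, List.map_map]
      induction q with
      | nil => simp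
      | cons m2 q ihq =>
        simp only [List.map_cons, List.sum_cons, Function.comp]
        rw [eval_monoMult m m2 vars hm (hq m2 (List.mem_cons_self)),
          ihq (fun m' hm' => hq m' (List.mem_cons_of_mem _ hm'))]
        ring
    rw [hmap, eval_eq_sum (m :: p)]
    simp only [List.map_cons, List.sum_cons]
    rw [← eval_eq_sum]; ring

lemma eval_polyScale (c : ℕ) (p : NatPoly) (vars : List ℕ) :
    evalNatPoly (polyScale c p) vars = c * evalNatPoly p vars := by
  simp only [eval_eq_sum, polyScale, List.map_map]
  induction p with
  | nil => simp
  | cons m p ih =>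
    simp only [List.map_cons, List.sum_cons, Function.comp] at *
    rw [ih]
    simp [evalNatMonomial]
    ring

lemma conjEncode_ge (pairs : List (NatPoly × NatPoly)) (vars : List ℕ)
    (hall : ∀ pr ∈ pairs, allLen vars.length pr.1 ∧ allLen vars.length pr.2) :
    evalNatPoly (conjEncode pairs).2 vars ≤ evalNatPoly (conjEncode pairs).1 vars := by
  induction pairs with
  | nil => simp [conjEncode]
  | cons pr rest ih =>
    obtain ⟨p, n⟩ := pr
    have hp := (hall _ (List.mem_cons_self)).1
    have hn := (hall _ (List.mem_cons_self)).2
    simp only [conjEncode, eval_append]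
    rw [eval_polyScale, eval_polyMult p n vars hp hn,
      show polySq p = polyMult p p from rfl, eval_polyMult p p vars hp hp,
      show polySq n = polyMult n n from rfl, eval_polyMult n n vars hn hn]
    have h1 : 2 * (evalNatPoly p vars * evalNatPoly n vars)
        ≤ evalNatPoly p vars * evalNatPoly p vars
          + evalNatPoly n vars * evalNatPoly n vars := by
      nlinarith [two_mul_le_add_sq (evalNatPoly p vars) (evalNatPoly n vars)]
    have h2 := ih (fun pr' hpr' => hall pr' (List.mem_cons_of_mem _ hpr'))
    omega

/-- Correctness of the sum-of-squares conjunction encoding. -/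
theorem conjEncode_correct (k : ℕ) (pairs : List (NatPoly × NatPoly)) (vars : List ℕ)
    (hlen : vars.length = k)
    (hall : ∀ pr ∈ pairs, allLen k pr.1 ∧ allLen k pr.2) :
    evalNatPoly (conjEncode pairs).1 vars = evalNatPoly (conjEncode pairs).2 vars ↔
      ∀ pr ∈ pairs, evalNatPoly pr.1 vars = evalNatPoly pr.2 vars := by
  subst hlen
  induction pairs with
  | nil => simp [conjEncode]
  | cons pr rest ih =>
    obtain ⟨p, n⟩ := pr
    have hp := (hall _ (List.mem_cons_self)).1
    have hn := (hall _ (List.mem_cons_self)).2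
    have hrest : ∀ pr' ∈ rest, allLen vars.length pr'.1 ∧ allLen vars.length pr'.2 :=
      fun pr' hpr' => hall pr' (List.mem_cons_of_mem _ hpr')
    simp only [conjEncode, eval_append]
    rw [eval_polyScale, eval_polyMult p n vars hp hn,
      show polySq p = polyMult p p from rfl, eval_polyMult p p vars hp hp,
      show polySq n = polyMult n n from rfl, eval_polyMult n n vars hn hn]
    have h1 : 2 * (evalNatPoly p vars * evalNatPoly n vars)
        ≤ evalNatPoly p vars * evalNatPoly p vars
          + evalNatPoly n vars * evalNatPoly n vars := by
      nlinarith [two_mul_le_add_sq (evalNatPoly p vars) (evalNatPoly n vars)]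
    have h2 := conjEncode_ge rest vars hrest
    have ih' := ih hrest
    constructor
    · intro h
      have hsq : evalNatPoly p vars * evalNatPoly p vars
          + evalNatPoly n vars * evalNatPoly n vars
          = 2 * (evalNatPoly p vars * evalNatPoly n vars) := by omega
      have heq : evalNatPoly p vars = evalNatPoly n vars := by nlinarith
      have hr : evalNatPoly (conjEncode rest).1 vars
          = evalNatPoly (conjEncode rest).2 vars := by omega
      intro pr' hpr'
      rcases List.mem_cons.mp hpr' with h' | h'
      · subst h'; exact heq
      · exact ih'.mp hr pr' h'
    · intro h
      have heq := h (p, n) (List.mem_cons_self)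
      have hr := ih'.mpr (fun pr' hpr' => h pr' (List.mem_cons_of_mem _ hpr'))
      simp only at heq
      rw [heq, hr]; ring

end Rice
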